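/- arXiv:2404.14597 — 2 statements merged into one kernel-verified Lean document; each statement's English description precedes it below -/
import Mathlib

section
/- Let σ be a (u,v)-simplex of the bisimplicial nerve of Path(l), i.e. data of integers 0 ≤ i₀ ≤ i₁ ≤ ... ≤ i_u ≤ l together with, for each 0 ≤ m < u, a chain of v composable 2-morphisms (inclusions of subsets) in Hom_{Path(l)}(i_m, i_{m+1}). If σ is non-degenerate, then u + v ≤ l. -/
/-- A non-degenerate `(u,v)`-simplex of the bisimplicial nerve of `Path(l)` — a weakly
increasing sequence `idx 0 ≤ ... ≤ idx u ≤ l` together with, for each `m < u`, a chain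
`S m 0 ⊆ ... ⊆ S m v` of subsets of `[idx m, idx (m+1)]` containing both endpoints,
which is neither horizontally degenerate (`idx m = idx (m+1)` for some `m`) nor vertically
degenerate (some step `r` of all chains trivial) — satisfies `u + v ≤ l`. -/
theorem stmt_4 (l u v : ℕ) (idx : ℕ → ℕ) (S : ℕ → ℕ → Finset ℕ)
    (hmono : ∀ m < u, idx m ≤ idx (m + 1)) (hbound : idx u ≤ l)
    (hS : ∀ m < u, ∀ r ≤ v, S m r ⊆ Finset.Icc (idx m) (idx (m + 1)) ∧
      idx m ∈ S m r ∧ idx (m + 1) ∈ S m r)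
    (hchain : ∀ m < u, ∀ r < v, S m r ⊆ S m (r + 1))
    (hnd₁ : ∀ m < u, idx m ≠ idx (m + 1))
    (hnd₂ : ∀ r < v, ∃ m, m < u ∧ S m r ≠ S m (r + 1)) :
    u + v ≤ l := by
  set F : ℕ → ℕ := fun r => ∑ m ∈ Finset.range u, (S m r).card with hF
  -- F 0 ≥ 2 * u
  have hF0 : 2 * u ≤ F 0 := by
    calc 2 * u = ∑ _m ∈ Finset.range u, 2 := by simp [mul_comm]
    _ ≤ F 0 := by
        apply Finset.sum_le_sum
        intro m hm
        rw [Finset.mem_range] at hm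
        obtain ⟨_, h1, h2⟩ := hS m hm 0 (Nat.zero_le _)
        have hne : idx m ≠ idx (m + 1) := hnd₁ m hm
        have : ({idx m, idx (m+1)} : Finset ℕ) ⊆ S m 0 := by
          intro x hx
          simp at hx
          rcases hx with h | h <;> subst h <;> assumption
        calc 2 = ({idx m, idx (m+1)} : Finset ℕ).card := by
                rw [Finset.card_insert_of_notMem (by simpa using hne)]; simp
        _ ≤ _ := Finset.card_le_card this
  -- F strictly increases
  have hstep : ∀ r < v, F r + 1 ≤ F (r + 1) := by
    intro r hr
    obtain ⟨m, hm, hne⟩ := hnd₂ r hr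
    have : F r < F (r + 1) := by
      apply Finset.sum_lt_sum
      · intro i hi
        exact Finset.card_le_card (hchain i (Finset.mem_range.mp hi) r hr)
      · exact ⟨m, Finset.mem_range.mpr hm,
          Finset.card_lt_card (lt_of_le_of_ne (hchain m hm r hr) hne)⟩
    omega
  -- so F v ≥ F 0 + v
  have hFv : ∀ r ≤ v, F 0 + r ≤ F r := by
    intro r hr
    induction r with
    | zero => omega
    | succ n ih =>
      have h1 := ih (by omega)
      have h2 := hstep n (by omega)
      omega
  -- F v ≤ telescoping bound
  have hub : ∀ n ≤ u, (∑ m ∈ Finset.range n, (S m v).card) + idx 0 ≤ idx n + n := by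
    intro n hn
    induction n with
    | zero => simp
    | succ k ih =>
      have hk : k < u := by omega
      have h1 := ih (by omega)
      obtain ⟨hsub, _, _⟩ := hS k hk v le_rfl
      have hcard : (S k v).card ≤ idx (k+1) - idx k + 1 := by
        calc (S k v).card ≤ (Finset.Icc (idx k) (idx (k+1))).card :=
              Finset.card_le_card hsub
        _ = idx (k+1) + 1 - idx k := Nat.card_Icc _ _
        _ ≤ idx (k+1) - idx k + 1 := by omega
      rw [Finset.sum_range_succ]
      have hmk := hmono k hk
      omega
  have h1 := hFv v le_rfl
  have h2 := hub u le_rfl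
  have e1 : F 0 = ∑ m ∈ Finset.range u, (S m 0).card := rfl
  have e2 : F v = ∑ m ∈ Finset.range u, (S m v).card := rfl
  rw [e1, e2] at h1
  rw [e1] at hF0
  omega
end

section
/- Let C be an (ordinary) category with finite limits, and F : A × B → C a functor from a product of small categories. Suppose A₀ ⊆ A and B₀ ⊆ B are full subcategories. Then F is a (pointwise) right Kan extension of its restriction to A₀ × B₀ if and only if: (i) F is a right Kan extension of its restriction to A₀ × B, and (ii) for every a₀ ∈ A₀ the restricted functor F(a₀, −) : B → C is a right Kan extension of its restriction to B₀. -/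
open CategoryTheory

section Stmt14AuxSection

open CategoryTheory.Limits

namespace Stmt14Aux

section Fubini

variable {J K C : Type*} [Category J] [Category K] [Category C]

variable (G : J × K ⥤ C) (P : J ⥤ C)
  (π : ∀ (j : J) (k : K), P.obj j ⟶ G.obj (j, k))
  (hπ : ∀ (j : J) (k k' : K) (g : k ⟶ k'), π j k ≫ G.map (𝟙 j, g) = π j k')
  (hnat : ∀ (j j' : J) (f : j ⟶ j') (k : K), P.map f ≫ π j' k = π j k ≫ G.map (f, 𝟙 k))

/-- The cone over the fiber diagram `G (j, -)` with apex `P.obj j`. -/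
@[simps]
def fiberCone (j : J) : Cone ((Functor.curry.obj G).obj j) where
  pt := P.obj j
  π :=
    { app := fun k => π j k
      naturality := fun k k' g => by
        dsimp
        rw [Category.id_comp]
        exact (hπ j k k' g).symm }

/-- The cone over `G` obtained by composing a cone over `P` with the maps `π`. -/
@[simps]
def totalCone (s : Cone P) : Cone G where
  pt := s.pt
  π :=
    { app := fun jk => s.π.app jk.1 ≫ π jk.1 jk.2
      naturality := by
        rintro ⟨j, k⟩ ⟨j', k'⟩ ⟨f, g⟩
        have hGm : G.map ((f, g) : (j,k) ⟶ (j',k')) =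
            G.map ((f, 𝟙 k) : (j,k) ⟶ (j',k)) ≫ G.map ((𝟙 j', g) : (j',k) ⟶ (j',k')) := by
          rw [← G.map_comp]
          congr 1
          simp [prod_comp]
        dsimp
        rw [Category.id_comp, hGm, ← Category.assoc, Category.assoc (s.π.app j),
          ← hnat j j' f k, ← Category.assoc, s.w f, Category.assoc, hπ j' k k' g] }

/-- The restriction of a cone over `G` to the fiber over `j`. -/
@[simps]
def restCone (t : Cone G) (j : J) : Cone ((Functor.curry.obj G).obj j) where
  pt := t.pt
  π :=
    { app := fun k => t.π.app (j, k)
      naturality := fun k k' g => by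
        dsimp
        rw [Category.id_comp]
        exact (t.w ((𝟙 j, g) : (j,k) ⟶ (j,k'))).symm }

variable (Q : ∀ j, IsLimit (fiberCone G P π hπ j))

include hnat in
/-- The outer cone over `P` obtained from a cone over `G` by taking fiberwise lifts. -/
@[simps]
def outerCone (t : Cone G) : Cone P where
  pt := t.pt
  π :=
    { app := fun j => (Q j).lift (restCone G t j)
      naturality := fun j j' f => by
        dsimp
        refine (Category.id_comp _).trans ?_
        refine (Q j').hom_ext fun k => ?_
        rw [(Q j').fac (restCone G t j')]
        erw [Category.assoc]
        have h1 : P.map f ≫ (fiberCone G P π hπ j').π.app k =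
            (fiberCone G P π hπ j).π.app k ≫ G.map (f, 𝟙 k) := hnat j j' f k
        erw [h1, ← Category.assoc, (Q j).fac (restCone G t j)]
        dsimp
        exact (t.w ((f, 𝟙 k) : (j,k) ⟶ (j',k))).symm }

/-- Fubini-type equivalence: given fiberwise limits, the total cone is a limit iff the
outer cone is. -/
noncomputable def fubiniIsLimitEquiv (s : Cone P) :
    IsLimit (totalCone G P π hπ hnat s) ≃ IsLimit s where
  toFun h :=
    { lift := fun t => h.lift (totalCone G P π hπ hnat t)
      fac := fun t j => by
        refine (Q j).hom_ext fun k => ?_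
        have h2 := h.fac (totalCone G P π hπ hnat t) (j, k)
        dsimp at h2 ⊢
        exact (Category.assoc _ _ _).trans h2
      uniq := fun t m hm => by
        refine h.uniq (totalCone G P π hπ hnat t) m fun jk => ?_
        show m ≫ (s.π.app jk.1 ≫ π jk.1 jk.2) = t.π.app jk.1 ≫ π jk.1 jk.2
        rw [← Category.assoc, hm jk.1] }
  invFun hs :=
    { lift := fun t => hs.lift (outerCone G P π hπ hnat Q t)
      fac := fun t jk => by
        show hs.lift (outerCone G P π hπ hnat Q t) ≫ (s.π.app jk.1 ≫ π jk.1 jk.2) = t.π.app jk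
        rw [← Category.assoc, hs.fac (outerCone G P π hπ hnat Q t) jk.1]
        have := (Q jk.1).fac (restCone G t jk.1) jk.2
        dsimp at this
        simp only [outerCone_π_app]
        exact this
      uniq := fun t m hm => by
        refine hs.uniq (outerCone G P π hπ hnat Q t) m fun j => ?_
        refine (Q j).hom_ext fun k => ?_
        have h3 := (Q j).fac (restCone G t j) k
        dsimp at h3 ⊢
        erw [h3, Category.assoc]
        exact hm (j, k) }
  left_inv _ := Subsingleton.elim _ _
  right_inv _ := Subsingleton.elim _ _

end Fubini

section Main

universe w₁ w₂ w₃ w₄ w₅ t₁ t₂ t₃ t₄ t₅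

variable {A₀ : Type t₁} {B₀ : Type t₂} {A : Type t₃} {B : Type t₄} {C : Type t₅}
  [Category.{w₁} A₀] [Category.{w₂} B₀] [Category.{w₃} A] [Category.{w₄} B]
  [Category.{w₅} C]
variable (IA : A₀ ⥤ A) (IB : B₀ ⥤ B) (F : A × B ⥤ C)

/-- The comparison functor from the product of structured arrow categories. -/
@[simps]
def eAB (a : A) (b : B) :
    StructuredArrow a IA × StructuredArrow b IB ⥤ StructuredArrow (a, b) (IA.prod IB) where
  obj uv := StructuredArrow.mk (Y := (uv.1.right, uv.2.right)) (uv.1.hom, uv.2.hom)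
  map f := StructuredArrow.homMk (f.1.right, f.2.right)

/-- Inverse of `eAB`. -/
@[simps]
def iAB (a : A) (b : B) :
    StructuredArrow (a, b) (IA.prod IB) ⥤ StructuredArrow a IA × StructuredArrow b IB where
  obj w := (StructuredArrow.mk (Y := w.right.1) w.hom.1,
    StructuredArrow.mk (Y := w.right.2) w.hom.2)
  map φ := (StructuredArrow.homMk φ.right.1 (congrArg Prod.fst (StructuredArrow.w φ)),
    StructuredArrow.homMk φ.right.2 (congrArg Prod.snd (StructuredArrow.w φ)))

/-- `eAB` is an equivalence. -/
def eABEquiv (a : A) (b : B) :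
    StructuredArrow a IA × StructuredArrow b IB ≌ StructuredArrow (a, b) (IA.prod IB) :=
  CategoryTheory.Equivalence.mk (eAB IA IB a b) (iAB IA IB a b)
    (NatIso.ofComponents (fun uv => Iso.refl _) (by intro X Y f; ext <;> erw [Category.comp_id, Category.id_comp] <;> rfl))
    (NatIso.ofComponents (fun w => Iso.refl _) (by intro X Y f; ext <;> erw [Category.comp_id, Category.id_comp] <;> rfl))

instance (a : A) (b : B) : (eAB IA IB a b).IsEquivalence :=
  (eABEquiv IA IB a b).isEquivalence_functor

instance (a : A) (b : B) : (eAB IA IB a b).Initial :=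
  Functor.initial_of_adjunction (eABEquiv IA IB a b).toAdjunction

/-- The functor `u ↦ ((u.hom, 𝟙 b))` into structured arrows over `IA.prod (𝟭 B)`. -/
@[simps]
def jA (a : A) (b : B) :
    StructuredArrow a IA ⥤ StructuredArrow (a, b) (IA.prod (𝟭 B)) where
  obj u := StructuredArrow.mk (Y := (u.right, b)) (u.hom, 𝟙 b)
  map f := StructuredArrow.homMk (f.right, 𝟙 b)

/-- Right adjoint to `jA`. -/
@[simps]
def rA (a : A) (b : B) :
    StructuredArrow (a, b) (IA.prod (𝟭 B)) ⥤ StructuredArrow a IA where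
  obj w := StructuredArrow.mk (Y := w.right.1) w.hom.1
  map φ := StructuredArrow.homMk φ.right.1 (congrArg Prod.fst (StructuredArrow.w φ))

/-- The adjunction `jA ⊣ rA`. -/
def adjJ (a : A) (b : B) : jA IA a b ⊣ rA IA a b :=
  Adjunction.mkOfHomEquiv
    { homEquiv := fun u w =>
        { toFun := fun φ => StructuredArrow.homMk φ.right.1
            (congrArg Prod.fst (StructuredArrow.w φ))
          invFun := fun ψ => StructuredArrow.homMk (ψ.right, w.hom.2)
            (by
              have h1 := StructuredArrow.w ψ
              dsimp at h1 ⊢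
              ext
              · exact h1
              · exact Category.id_comp _)
          left_inv := fun φ => by
            have h2 := congrArg Prod.snd (StructuredArrow.w φ)
            dsimp at h2
            erw [Category.id_comp] at h2
            ext
            · rfl
            · exact h2.symm
          right_inv := fun ψ => by
            ext
            rfl }
      homEquiv_naturality_left_symm := fun f g => by
        ext
        · rfl
        · exact (Category.id_comp _).symm }

instance (a : A) (b : B) : (jA IA a b).Initial :=
  Functor.initial_of_adjunction (adjJ IA a b)

section G0

variable [IA.Full] [IA.Faithful]

/-- The canonical map out of the initial object of `StructuredArrow (IA.obj a₀) IA`. -/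
noncomputable def toU0 {a₀ : A₀} (u : StructuredArrow (IA.obj a₀) IA) :
    StructuredArrow.mk (𝟙 (IA.obj a₀)) ⟶ u :=
  StructuredArrow.homMk (IA.preimage u.hom) (by simp)

lemma toU0_ext {a₀ : A₀} {u : StructuredArrow (IA.obj a₀) IA}
    (f g : StructuredArrow.mk (𝟙 (IA.obj a₀)) ⟶ u) : f = g := by
  ext
  apply IA.map_injective
  have hf := StructuredArrow.w f
  have hg := StructuredArrow.w g
  dsimp at hf hg
  rw [Category.id_comp] at hf hg
  rw [hf, hg]

/-- The functor `v ↦ (u₀, v)`. -/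
@[simps]
def G0 (a₀ : A₀) (b : B) :
    StructuredArrow b IB ⥤ StructuredArrow (IA.obj a₀) IA × StructuredArrow b IB where
  obj v := (StructuredArrow.mk (𝟙 (IA.obj a₀)), v)
  map g := (𝟙 _, g)

/-- `G0` is left adjoint to the second projection. -/
noncomputable def adjG0 (a₀ : A₀) (b : B) : G0 IA IB a₀ b ⊣ CategoryTheory.Prod.snd _ _ :=
  Adjunction.mkOfHomEquiv
    { homEquiv := fun v uw =>
        { toFun := fun φ => φ.2
          invFun := fun g => (toU0 IA uw.1, g)
          left_inv := fun φ => Prod.ext (toU0_ext IA _ _) rfl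
          right_inv := fun g => rfl }
      homEquiv_naturality_left_symm := fun f g => by
        dsimp
        exact Prod.ext (toU0_ext IA _ _) rfl
      homEquiv_naturality_right := fun f g => rfl }

instance (a₀ : A₀) (b : B) : (G0 IA IB a₀ b).Initial :=
  Functor.initial_of_adjunction (adjG0 IA IB a₀ b)

end G0

section Cones

open Functor

variable [IA.Full] [IA.Faithful]

/-- The product diagram. -/
abbrev Gd (a : A) (b : B) : StructuredArrow a IA × StructuredArrow b IB ⥤ C :=
  eAB IA IB a b ⋙ (StructuredArrow.proj ((a, b) : A × B) (IA.prod IB) ⋙ ((IA.prod IB) ⋙ F))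

/-- The outer diagram. -/
abbrev Pd (a : A) (b : B) : StructuredArrow a IA ⥤ C :=
  jA IA a b ⋙ (StructuredArrow.proj ((a, b) : A × B) (IA.prod (𝟭 B)) ⋙ ((IA.prod (𝟭 B)) ⋙ F))

/-- The connecting maps. -/
abbrev πd (a : A) (b : B) (u : StructuredArrow a IA) (v : StructuredArrow b IB) :
    (Pd IA F a b).obj u ⟶ (Gd IA IB F a b).obj (u, v) :=
  F.map (𝟙 (IA.obj u.right), v.hom)

lemma hπd (a : A) (b : B) : ∀ (u : StructuredArrow a IA) (v v' : StructuredArrow b IB)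
    (g : v ⟶ v'), πd IA IB F a b u v ≫ (Gd IA IB F a b).map (𝟙 u, g) = πd IA IB F a b u v' := by
  intro u v v' g
  dsimp
  simp [← F.map_comp]
  congr 1
  ext
  · exact (Category.id_comp _).trans (IA.map_id _)
  · exact StructuredArrow.w g

lemma hnatd (a : A) (b : B) : ∀ (u u' : StructuredArrow a IA) (f : u ⟶ u')
    (v : StructuredArrow b IB),
    (Pd IA F a b).map f ≫ πd IA IB F a b u' v =
      πd IA IB F a b u v ≫ (Gd IA IB F a b).map (f, 𝟙 v) := by
  intro u u' f v
  dsimp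
  simp [← F.map_comp]
  congr 1
  ext
  · exact (Category.comp_id _).trans (Category.id_comp _).symm
  · erw [Category.id_comp, IB.map_id]
    exact (Category.comp_id _).symm

/-- Comparison of fiber diagrams. -/
@[simps!]
def alphaQ (a : A) (b : B) (u : StructuredArrow a IA) :
    (StructuredArrow.proj b IB ⋙ (IB ⋙ (Functor.curry.obj F).obj (IA.obj u.right))) ≅
      (Functor.curry.obj (Gd IA IB F a b)).obj u :=
  NatIso.ofComponents (fun v => Iso.refl _) (by
    intro v v' g
    dsimp
    simp
    erw [Category.comp_id, Category.id_comp, IA.map_id]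
    rfl)

/-- Condition (ii) provides the fiberwise limits. -/
noncomputable def QofII (a : A) (b : B) (u : StructuredArrow a IA)
    (h : IsLimit ((Functor.RightExtension.mk ((Functor.curry.obj F).obj (IA.obj u.right))
      (𝟙 (IB ⋙ (Functor.curry.obj F).obj (IA.obj u.right)))).coneAt b)) :
    IsLimit (fiberCone (Gd IA IB F a b) (Pd IA F a b) (πd IA IB F a b)
      (hπd IA IB F a b) u) :=
  (IsLimit.equivOfNatIsoOfIso (alphaQ IA IB F a b u)
    ((Functor.RightExtension.mk ((Functor.curry.obj F).obj (IA.obj u.right))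
      (𝟙 (IB ⋙ (Functor.curry.obj F).obj (IA.obj u.right)))).coneAt b)
    (fiberCone (Gd IA IB F a b) (Pd IA F a b) (πd IA IB F a b) (hπd IA IB F a b) u)
    (Cones.ext (Iso.refl _) (fun v => by
      dsimp
      simp
      erw [Category.comp_id, Category.comp_id, Category.id_comp]
      rfl))) h

/-- The central equivalence between the two pointwise conditions. -/
noncomputable def coreEquiv (a : A) (b : B)
    (hii : ∀ (a₀ : A₀) (b' : B),
      IsLimit ((Functor.RightExtension.mk ((Functor.curry.obj F).obj (IA.obj a₀))
        (𝟙 (IB ⋙ (Functor.curry.obj F).obj (IA.obj a₀)))).coneAt b')) :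
    IsLimit ((Functor.RightExtension.mk F (𝟙 ((IA.prod IB) ⋙ F))).coneAt (a, b)) ≃
      IsLimit ((Functor.RightExtension.mk F
        (𝟙 ((IA.prod (𝟭 B)) ⋙ F))).coneAt (a, b)) :=
  (Functor.Initial.isLimitWhiskerEquiv (eAB IA IB a b) _).symm.trans
    ((IsLimit.equivIsoLimit
      (Cones.ext (Iso.refl _) (fun uv => by
        dsimp
        simp [← F.map_comp]
        erw [Category.comp_id, Category.id_comp, Category.comp_id, ← F.map_comp]
        congr 1
        ext
        · exact (Category.comp_id _).symm
        · exact (Category.id_comp _).symm) :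
        (((Functor.RightExtension.mk F (𝟙 ((IA.prod IB) ⋙ F))).coneAt (a, b)).whisker
            (eAB IA IB a b)) ≅
          totalCone (Gd IA IB F a b) (Pd IA F a b) (πd IA IB F a b) (hπd IA IB F a b)
            (hnatd IA IB F a b)
            (((Functor.RightExtension.mk F
              (𝟙 ((IA.prod (𝟭 B)) ⋙ F))).coneAt (a, b)).whisker (jA IA a b)))).trans
      ((fubiniIsLimitEquiv (Gd IA IB F a b) (Pd IA F a b) (πd IA IB F a b)
          (hπd IA IB F a b) (hnatd IA IB F a b)
          (fun u => QofII IA IB F a b u (hii u.right b)) _).trans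
        (Functor.Initial.isLimitWhiskerEquiv (jA IA a b) _)))

/-- Comparison of diagrams for the extraction of condition (ii). -/
@[simps!]
def alphaE (a₀ : A₀) (b : B) :
    (G0 IA IB a₀ b ⋙ (eAB IA IB (IA.obj a₀) b ⋙
        (StructuredArrow.proj ((IA.obj a₀, b) : A × B) (IA.prod IB) ⋙ ((IA.prod IB) ⋙ F)))) ≅
      (StructuredArrow.proj b IB ⋙ (IB ⋙ (Functor.curry.obj F).obj (IA.obj a₀))) :=
  NatIso.ofComponents (fun v => Iso.refl _) (by
    intro v v' g
    dsimp
    simp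
    erw [Category.comp_id, Category.id_comp, IA.map_id]
    rfl)

/-- Extraction of condition (ii) from the full pointwise condition. -/
noncomputable def extractII (a₀ : A₀) (b : B)
    (h : IsLimit ((Functor.RightExtension.mk F
      (𝟙 ((IA.prod IB) ⋙ F))).coneAt (IA.obj a₀, b))) :
    IsLimit ((Functor.RightExtension.mk ((Functor.curry.obj F).obj (IA.obj a₀))
      (𝟙 (IB ⋙ (Functor.curry.obj F).obj (IA.obj a₀)))).coneAt b) :=
  (IsLimit.equivOfNatIsoOfIso (alphaE IA IB F a₀ b)
    ((((Functor.RightExtension.mk F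
        (𝟙 ((IA.prod IB) ⋙ F))).coneAt (IA.obj a₀, b)).whisker
          (eAB IA IB (IA.obj a₀) b)).whisker (G0 IA IB a₀ b))
    ((Functor.RightExtension.mk ((Functor.curry.obj F).obj (IA.obj a₀))
      (𝟙 (IB ⋙ (Functor.curry.obj F).obj (IA.obj a₀)))).coneAt b)
    (Cones.ext (Iso.refl _) (fun v => by
      dsimp
      simp
      erw [Category.comp_id, Category.comp_id, Category.id_comp])))
    ((Functor.Initial.isLimitWhiskerEquiv (G0 IA IB a₀ b) _).symm
      ((Functor.Initial.isLimitWhiskerEquiv (eAB IA IB (IA.obj a₀) b) _).symm h))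

end Cones

end Main

end Stmt14Aux

end Stmt14AuxSection

/-- Let `C` be a category with (all relevant) limits, `F : A × B ⥤ C`, and let
`IA : A₀ ⥤ A`, `IB : B₀ ⥤ B` be (inclusions of) full subcategories.  Then `F` is a pointwise
right Kan extension of its restriction to `A₀ × B₀` if and only if (i) `F` is a pointwise
right Kan extension of its restriction to `A₀ × B`, and (ii) for every `a₀ ∈ A₀`, the functor
`F(a₀, -) : B ⥤ C` is a pointwise right Kan extension of its restriction to `B₀`. -/
theorem stmt_14 {A₀ B₀ A B C : Type*} [Category A₀] [Category B₀] [Category A] [Category B]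
    [Category C] [Limits.HasLimits C]
    (IA : A₀ ⥤ A) (IB : B₀ ⥤ B) [IA.Full] [IA.Faithful] [IB.Full] [IB.Faithful]
    (F : A × B ⥤ C) :
    Nonempty
        ((Functor.RightExtension.mk F
          (𝟙 ((IA.prod IB) ⋙ F))).IsPointwiseRightKanExtension) ↔
      (Nonempty ((Functor.RightExtension.mk F
          (𝟙 ((IA.prod (𝟭 B)) ⋙ F))).IsPointwiseRightKanExtension) ∧
        ∀ a₀ : A₀, Nonempty ((Functor.RightExtension.mk ((Functor.curry.obj F).obj (IA.obj a₀))
          (𝟙 (IB ⋙ (Functor.curry.obj F).obj (IA.obj a₀)))).IsPointwiseRightKanExtension)) := by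
  constructor
  · rintro ⟨h⟩
    have hii : ∀ (a₀ : A₀) (b : B),
        Limits.IsLimit ((Functor.RightExtension.mk ((Functor.curry.obj F).obj (IA.obj a₀))
          (𝟙 (IB ⋙ (Functor.curry.obj F).obj (IA.obj a₀)))).coneAt b) :=
      fun a₀ b => Stmt14Aux.extractII IA IB F a₀ b (h (IA.obj a₀, b))
    refine ⟨⟨fun x => ?_⟩, fun a₀ => ⟨fun b => hii a₀ b⟩⟩
    obtain ⟨a, b⟩ := x
    exact Stmt14Aux.coreEquiv IA IB F a b hii (h (a, b))
  · rintro ⟨⟨hi⟩, hii'⟩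
    have hii : ∀ (a₀ : A₀) (b : B),
        Limits.IsLimit ((Functor.RightExtension.mk ((Functor.curry.obj F).obj (IA.obj a₀))
          (𝟙 (IB ⋙ (Functor.curry.obj F).obj (IA.obj a₀)))).coneAt b) :=
      fun a₀ b => (hii' a₀).some b
    refine ⟨fun x => ?_⟩
    obtain ⟨a, b⟩ := x
    exact (Stmt14Aux.coreEquiv IA IB F a b hii).symm (hi (a, b))
end
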